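/- Let H have nonnegative entries. A solution to the silhouette problem T(Hz) = y (z binary) exists if and only if T(H x_max(y)) = y, where x_max(y) = ¬T(Hᵀ(¬y)). -/

import Mathlib

open Finset

/-- Positivity thresholding operator. -/
noncomputable def T {K : ℕ} (v : Fin K → ℝ) : Fin K → ℝ := fun k => if 0 < v k then 1 else 0

/-- Entrywise Boolean negation (swaps 0 and 1 on binary vectors). -/
def bneg {K : ℕ} (v : Fin K → ℝ) : Fin K → ℝ := fun k => 1 - v k

/-- Matrix-vector product. -/
def mulv {M N : ℕ} (H : Fin M → Fin N → ℝ) (x : Fin N → ℝ) : Fin M → ℝ :=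
  fun m => ∑ n, H m n * x n

/-- Transpose. -/
def tr {M N : ℕ} (H : Fin M → Fin N → ℝ) : Fin N → Fin M → ℝ := fun n m => H m n

/-- Silhouette operator. -/
noncomputable def S {M N : ℕ} (H : Fin M → Fin N → ℝ) (x : Fin N → ℝ) : Fin M → ℝ := T (mulv H x)

/-- Maximal solution candidate. -/
noncomputable def xmax {M N : ℕ} (H : Fin M → Fin N → ℝ) (y : Fin M → ℝ) : Fin N → ℝ :=
  bneg (T (mulv (tr H) (bneg y)))

/-- A vector is binary if each entry is 0 or 1. -/
def IsBin {K : ℕ} (v : Fin K → ℝ) : Prop := ∀ k, v k = 0 ∨ v k = 1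

theorem stmt_12 {M N : ℕ} (H : Fin M → Fin N → ℝ) (hH : ∀ m n, 0 ≤ H m n)
    (y : Fin M → ℝ) (hy : IsBin y) :
    (∃ z : Fin N → ℝ, IsBin z ∧ S H z = y) ↔ S H (xmax H y) = y := by
  have hxbin : IsBin (xmax H y) := by
    intro n
    simp only [xmax, bneg, T]
    split <;> simp
  have hxmax_one : ∀ n, xmax H y n = 1 ↔ ∀ m, y m = 0 → H m n = 0 := by
    intro n
    simp only [xmax, bneg, T, mulv, tr]
    constructor
    · intro h m hm
      by_cases hpos : 0 < ∑ m, H m n * (1 - y m)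
      · simp [hpos] at h
      · have hsum : ∑ m, H m n * (1 - y m) = 0 := le_antisymm (not_lt.mp hpos)
          (Finset.sum_nonneg fun m _ => mul_nonneg (hH m n) (by rcases hy m with h|h <;> simp [h]))
        have := (Finset.sum_eq_zero_iff_of_nonneg
          (fun m _ => mul_nonneg (hH m n) (by rcases hy m with h|h <;> simp [h]))).mp hsum m (by simp)
        rw [hm] at this; linarith
    · intro h
      have hsum : ∑ m, H m n * (1 - y m) = 0 := by
        apply Finset.sum_eq_zero
        intro m _
        rcases hy m with hm|hm
        · rw [h m hm]; ring
        · rw [hm]; ring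
      simp [hsum]
  constructor
  · rintro ⟨z, hz, hS⟩
    funext m
    rcases hy m with h0 | h1
    · rw [h0]
      simp only [S, T, mulv]
      refine if_neg ?_
      rw [not_lt]
      apply le_of_eq
      apply Finset.sum_eq_zero
      intro n _
      rcases hxbin n with hx|hx
      · rw [hx]; ring
      · rw [(hxmax_one n).mp hx m h0]; ring
    · have hz1 : 0 < ∑ n, H m n * z n := by
        by_contra hpos
        have := congrFun hS m
        simp only [S, T, mulv] at this
        replace this := (if_neg hpos).symm.trans this
        rw [h1] at this; norm_num at this
      have hle : ∀ n, z n ≤ xmax H y n := by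
        intro n
        rcases hz n with h|h
        · rw [h]; rcases hxbin n with h'|h' <;> rw [h'] <;> norm_num
        · rw [h, (hxmax_one n).mpr]
          intro m' hm'
          have hSm' := congrFun hS m'
          simp only [S, T, mulv] at hSm'
          rw [hm'] at hSm'
          by_cases hpos : 0 < ∑ n, H m' n * z n
          · simp [hpos] at hSm'
          · have hsum : ∑ n, H m' n * z n = 0 := le_antisymm (not_lt.mp hpos)
              (Finset.sum_nonneg fun n _ => mul_nonneg (hH m' n) (by rcases hz n with h|h <;> simp [h]))
            have := (Finset.sum_eq_zero_iff_of_nonneg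
              (fun n _ => mul_nonneg (hH m' n) (by rcases hz n with h|h <;> simp [h]))).mp hsum n (by simp)
            rw [h] at this; linarith
      rw [h1]
      simp only [S, T, mulv]
      refine if_pos ?_
      calc (0:ℝ) < ∑ n, H m n * z n := hz1
        _ ≤ ∑ n, H m n * xmax H y n :=
          Finset.sum_le_sum fun n _ => mul_le_mul_of_nonneg_left (hle n) (hH m n)
  · intro h
    exact ⟨xmax H y, hxbin, h⟩
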